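/- If {n_0,...,n_p} is a compound sequence, then for each i in [1,p], n_i is not contained in the additive submonoid of ℕ generated by n_0, ..., n_{i-1}; consequently {n_0,...,n_p} is a minimal generating set of the numerical semigroup it generates. -/

import Mathlib

theorem stmt5 (p : ℕ) (hp : 1 ≤ p) (a b : ℕ → ℕ)
    (ha : ∀ i, 1 ≤ i → i ≤ p → 2 ≤ a i ∧ a i < b i)
    (hab : ∀ i j, 1 ≤ j → j ≤ i → i ≤ p → Nat.gcd (a i) (b j) = 1)
    (n : ℕ → ℕ)
    (hn : ∀ i, i ≤ p → n i = (∏ j ∈ Finset.Icc 1 i, b j) * ∏ j ∈ Finset.Icc (i+1) p, a j) :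
    (∀ i, 1 ≤ i → i ≤ p → ∀ x : ℕ → ℕ,
        ∑ j ∈ Finset.range i, x j * n j ≠ n i) ∧
    (∀ i, i ≤ p → ∀ x : ℕ → ℕ, x i = 0 →
        ∑ j ∈ Finset.range (p+1), x j * n j ≠ n i) := by
  -- basic positivity
  have hb3 : ∀ i, 1 ≤ i → i ≤ p → 3 ≤ b i := by
    intro i h1 h2
    have := ha i h1 h2
    omega
  have hApos : ∀ i, 1 ≤ i → 0 < ∏ k ∈ Finset.Icc i p, a k := by
    intro i h1
    apply Finset.prod_pos
    intro k hk
    simp only [Finset.mem_Icc] at hk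
    have := ha k (le_trans h1 hk.1) hk.2
    omega
  have hBpos : ∀ i, i ≤ p → 0 < ∏ k ∈ Finset.Icc 1 i, b k := by
    intro i h2
    apply Finset.prod_pos
    intro k hk
    simp only [Finset.mem_Icc] at hk
    have := hb3 k hk.1 (le_trans hk.2 h2)
    omega
  have hnpos : ∀ j, j ≤ p → 0 < n j := by
    intro j hj
    rw [hn j hj]
    exact Nat.mul_pos (hBpos j hj) (hApos (j+1) (by omega))
  -- a-tail divides earlier generators
  have hdvd : ∀ j i, j < i → i ≤ p → (∏ k ∈ Finset.Icc i p, a k) ∣ n j := by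
    intro j i hji hip
    rw [hn j (by omega)]
    exact Dvd.dvd.mul_left
      (Finset.prod_dvd_prod_of_subset _ _ a (Finset.Icc_subset_Icc (by omega) le_rfl)) _
  -- splitting the a-tail
  have hAsplit : ∀ i, 1 ≤ i → i ≤ p →
      (∏ k ∈ Finset.Icc i p, a k) = a i * ∏ k ∈ Finset.Icc (i+1) p, a k := by
    intro i h1 h2
    rw [Finset.Icc_add_one_left_eq_Ioc, Finset.mul_prod_Ioc_eq_prod_Icc h2]
  -- splitting the b-head
  have hBsplit : ∀ i, 1 ≤ i → (∏ k ∈ Finset.Icc 1 i, b k) =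
      (∏ k ∈ Finset.Icc 1 (i-1), b k) * b i := by
    intro i h1
    have : i = (i - 1) + 1 := by omega
    rw [this, Finset.prod_Icc_succ_top (by omega)]
    simp
  -- coprimality of a i with the b-head
  have hcop : ∀ i, 1 ≤ i → i ≤ p → Nat.Coprime (a i) (∏ k ∈ Finset.Icc 1 i, b k) := by
    intro i h1 h2
    apply Nat.Coprime.prod_right
    intro k hk
    simp only [Finset.mem_Icc] at hk
    exact hab i k hk.1 hk.2 h2
  -- Part 1
  have part1 : ∀ i, 1 ≤ i → i ≤ p → ∀ x : ℕ → ℕ,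
      ∑ j ∈ Finset.range i, x j * n j ≠ n i := by
    intro i h1 h2 x heq
    have hsumdvd : (∏ k ∈ Finset.Icc i p, a k) ∣ ∑ j ∈ Finset.range i, x j * n j := by
      apply Finset.dvd_sum
      intro j hj
      simp only [Finset.mem_range] at hj
      exact Dvd.dvd.mul_left (hdvd j i hj h2) _
    rw [heq, hn i h2, hAsplit i h1 h2] at hsumdvd
    have hA1pos := hApos (i+1) (by omega)
    have hdvd2 : a i ∣ ∏ k ∈ Finset.Icc 1 i, b k := by
      have := (Nat.mul_dvd_mul_iff_right hA1pos).mp hsumdvd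
      exact this
    have hcd := Nat.Coprime.eq_one_of_dvd (hcop i h1 h2) hdvd2
    have := ha i h1 h2
    omega
  refine ⟨part1, ?_⟩
  -- Part 2
  intro i hip x hx heq
  -- inductive claim
  have main : ∀ q, i ≤ q → q ≤ p → ∀ x : ℕ → ℕ, x i = 0 →
      ∑ j ∈ Finset.range (q+1), x j * n j ≠ n i := by
    intro q hq
    induction q, hq using Nat.le_induction with
    | base =>
      intro _ x hx heq
      rw [Finset.sum_range_succ, hx, zero_mul, add_zero] at heq
      rcases Nat.eq_zero_or_pos i with h0 | h1
      · subst h0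
        simp at heq
        exact absurd heq.symm (Nat.ne_of_gt (hnpos 0 (by omega)))
      · exact part1 i h1 hip x heq
    | succ q hiq IH =>
      intro hq1p x hx heq
      have hqp : q ≤ p := by omega
      rw [Finset.sum_range_succ] at heq
      -- a (q+1) divides x (q+1)
      have hsumdvd : (∏ k ∈ Finset.Icc (q+1) p, a k) ∣ ∑ j ∈ Finset.range (q+1), x j * n j := by
        apply Finset.dvd_sum
        intro j hj
        simp only [Finset.mem_range] at hj
        exact Dvd.dvd.mul_left (hdvd j (q+1) hj hq1p) _
      have hnidvd : (∏ k ∈ Finset.Icc (q+1) p, a k) ∣ n i :=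
        hdvd i (q+1) (by omega) hq1p
      have htopdvd : (∏ k ∈ Finset.Icc (q+1) p, a k) ∣ x (q+1) * n (q+1) :=
        (Nat.dvd_add_right hsumdvd).mp (heq ▸ hnidvd)
      rw [hn (q+1) hq1p, hAsplit (q+1) (by omega) hq1p, ← mul_assoc] at htopdvd
      have hA2pos := hApos (q+2) (by omega)
      have hdvd3 : a (q+1) ∣ x (q+1) * ∏ k ∈ Finset.Icc 1 (q+1), b k :=
        (Nat.mul_dvd_mul_iff_right hA2pos).mp htopdvd
      have hadx : a (q+1) ∣ x (q+1) :=
        (Nat.Coprime.dvd_of_dvd_mul_right (hcop (q+1) (by omega) hq1p) hdvd3)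
      obtain ⟨y, hy⟩ := hadx
      -- exchange relation: x(q+1) * n(q+1) = y * b(q+1) * n q
      have hexch : x (q+1) * n (q+1) = (y * b (q+1)) * n q := by
        rw [hy, hn (q+1) hq1p, hn q hqp, hBsplit (q+1) (by omega)]
        have h1 : q + 1 - 1 = q := by omega
        rw [h1, hAsplit (q+1) (by omega) hq1p]
        ring
      rw [hexch] at heq
      rcases Nat.eq_or_lt_of_le hiq with hiq' | hiq'
      -- case i = q
      · subst hiq'
        rcases Nat.eq_zero_or_pos y with hy0 | hy1
        · subst hy0
          simp only [zero_mul, add_zero] at heq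
          exact IH hqp x hx heq
        · have h3 : 3 ≤ b (i+1) := hb3 (i+1) (by omega) hq1p
          have hni : 0 < n i := hnpos i hip
          have hge : 3 * n i ≤ y * b (i+1) * n i := by
            apply Nat.mul_le_mul_right
            calc 3 ≤ 1 * b (i+1) := by omega
            _ ≤ y * b (i+1) := Nat.mul_le_mul_right _ hy1
          omega
      -- case i < q
      · set x' : ℕ → ℕ := fun j => if j = q then x q + y * b (q+1) else x j with hx'
        apply IH hqp x' (by simp only [hx']; rw [if_neg (by omega : ¬ i = q)]; exact hx)
        rw [Finset.sum_range_succ]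
        have hsq : ∑ j ∈ Finset.range q, x' j * n j = ∑ j ∈ Finset.range q, x j * n j := by
          apply Finset.sum_congr rfl
          intro j hj
          simp only [Finset.mem_range] at hj
          simp [hx', Nat.ne_of_lt hj]
        rw [hsq]
        simp only [hx', if_pos rfl]
        rw [Finset.sum_range_succ] at heq
        rw [← heq]
        ring
  exact main p hip le_rfl x hx heq
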